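/- None of the sets 𝔹₀, 𝔹, 𝔸, 𝔸 ∩ 𝒔, 𝔹 ∩ 𝒔, and 𝔸 ∩ 𝔹 ∩ 𝒔 is closed under addition of sequences; in particular, none of them is a linear subspace of the space of real sequences. -/

import Mathlib

open Filter ENNReal
open scoped Classical

noncomputable section

/-- Coordinate projection onto a finite set of indices. -/
def proj (A : Finset ℕ) (f : ℕ → ℝ) : ℕ → ℝ := fun n => if n ∈ A then f n else 0

/-- Coordinate projection onto a set of indices. -/
def projSet (A : Set ℕ) (f : ℕ → ℝ) : ℕ → ℝ := fun n => if n ∈ A then f n else 0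

/-- `𝟙*_A(f) = ∑_{n ∈ A} f n`. -/
def oneStar (f : ℕ → ℝ) (A : Finset ℕ) : ℝ := ∑ n ∈ A, f n

/-- `A` is a greedy set of `f`. -/
def GreedySet (f : ℕ → ℝ) (A : Finset ℕ) : Prop :=
  ∀ n ∈ A, ∀ k, k ∉ A → |f k| ≤ |f n|

/-- `β(f,A) = sup_{I ∈ ℐ} |𝟙*_{I∖A}(f)| ∈ [0,∞]`, the sup running over all finite
integer intervals `I = [a,b]`. -/
def beta (f : ℕ → ℝ) (A : Finset ℕ) : ℝ≥0∞ :=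
  ⨆ a : ℕ, ⨆ b : ℕ, ENNReal.ofReal |oneStar f (Finset.Icc a b \ A)|

/-- `‖f‖_𝔹 = sup_{A ∈ 𝒢(f)} β(f,A) ∈ [0,∞]`. -/
def BNorm (f : ℕ → ℝ) : ℝ≥0∞ :=
  ⨆ A ∈ {A : Finset ℕ | GreedySet f A}, beta f A

/-- Membership in `𝔹`, i.e. `‖f‖_𝔹 < ∞`. -/
def MemB (f : ℕ → ℝ) : Prop := BNorm f < ⊤

/-- Membership in `c₀`. -/
def Memc0 (f : ℕ → ℝ) : Prop := Tendsto f atTop (nhds 0)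

/-- Membership in `𝔹₀`. -/
def MemB0 (f : ℕ → ℝ) : Prop :=
  Memc0 f ∧ ∀ ε : ℝ, 0 < ε → ∃ A : Finset ℕ, GreedySet f A ∧
    ∀ B : Finset ℕ, GreedySet f B → A ⊆ B → beta f B < ENNReal.ofReal ε

/-- The net `(𝟙*_A(f))_{A ∈ 𝒢(f)}`, directed by inclusion, converges to `s`. -/
def GreedyLim (f : ℕ → ℝ) (s : ℝ) : Prop :=
  ∀ ε : ℝ, 0 < ε → ∃ A : Finset ℕ, GreedySet f A ∧
    ∀ B : Finset ℕ, GreedySet f B → A ⊆ B → |oneStar f B - s| < ε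

/-- Membership in `𝔸`. -/
def MemA (f : ℕ → ℝ) : Prop := Memc0 f ∧ ∃ s, GreedyLim f s

/-- `σ_g(f)`, the greedy sum of `f` (junk value `0` if the greedy net does not converge). -/
def sigmaG (f : ℕ → ℝ) : ℝ := if h : ∃ s, GreedyLim f s then h.choose else 0

/-- `‖f‖_𝔸 = sup_{A ∈ 𝒢(f)} |σ_g(f) - 𝟙*_A(f)|`. -/
def ANorm (f : ℕ → ℝ) : ℝ≥0∞ :=
  ⨆ A ∈ {A : Finset ℕ | GreedySet f A}, ENNReal.ofReal |sigmaG f - oneStar f A|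

/-- The series `∑_n f n` converges (in the ordered sense) to `s`. -/
def SeriesLim (f : ℕ → ℝ) (s : ℝ) : Prop :=
  Tendsto (fun m => ∑ n ∈ Finset.range m, f n) atTop (nhds s)

/-- Membership in `𝒔`: the series `∑_n f n` converges. -/
def MemSeries (f : ℕ → ℝ) : Prop := ∃ s, SeriesLim f s

/-- `σ_s(f) = ∑_{n=0}^∞ f n` (junk value `0` if the series does not converge). -/
def sigmaS (f : ℕ → ℝ) : ℝ := if h : ∃ s, SeriesLim f s then h.choose else 0

/-- `‖f‖_𝒔 = sup_m |∑_{n = m}^∞ f n|`, expressed via `σ_s(f)` minus partial sums. -/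
def sNorm (f : ℕ → ℝ) : ℝ≥0∞ :=
  ⨆ m : ℕ, ENNReal.ofReal |sigmaS f - ∑ n ∈ Finset.range m, f n|

/-- `D(f)(m)`: the `m`-th term (for `m ≥ 1`) of the nonincreasing rearrangement of `|f|`,
as an element of `[0,∞]`. -/
def Drearr (f : ℕ → ℝ) (m : ℕ) : ℝ≥0∞ :=
  sInf {t : ℝ≥0∞ | {n : ℕ | t < ENNReal.ofReal |f n|}.Finite ∧
    {n : ℕ | t < ENNReal.ofReal |f n|}.ncard < m}

/-- `ρ_{1,∞}(f,k) = sup_{m ≥ 1} m · D(f)(m+k) ∈ [0,∞]`. Note `ρ_{1,∞}(f,0) = ‖f‖_{1,∞}`. -/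
def rho (f : ℕ → ℝ) (k : ℕ) : ℝ≥0∞ :=
  ⨆ m : ℕ, ⨆ _ : 1 ≤ m, (m : ℝ≥0∞) * Drearr f (m + k)

/-- Membership in `h_{1,∞}`: `lim_m m · D(f)(m) = 0`. -/
def Memh1inf (f : ℕ → ℝ) : Prop :=
  Tendsto (fun m : ℕ => (m : ℝ≥0∞) * Drearr f m) atTop (nhds 0)

/-- A sequence of nonempty finite integer intervals which is right-dominant:
`max J_k < min J_{k+1}` for all `k`. -/
def RightDominant (J : ℕ → Finset ℕ) : Prop :=
  (∀ k : ℕ, ∃ a b : ℕ, a ≤ b ∧ J k = Finset.Icc a b) ∧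
  ∀ k : ℕ, ∀ n ∈ J k, ∀ m ∈ J (k + 1), n < m

/-- `g` is Leibnizian with admissible sequence `J`. -/
def Admissible (g : ℕ → ℝ) (J : ℕ → Finset ℕ) : Prop :=
  RightDominant J ∧
  (∀ n : ℕ, g n ≠ 0 → ∃ k, n ∈ J k) ∧
  (∀ k : ℕ, oneStar g (J (k + 1)) ≤ oneStar g (J k)) ∧
  (∀ k : ℕ, ∀ n ∈ J k, g n ≠ 0 → ∀ m ∈ J (k + 1), g m < g n)

end

noncomputable section Aux

/-! ### Abstract pairing lemmas -/

section Pairing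
set_option linter.unusedSectionVars false

variable (y : ℕ → ℝ) (φ : ℕ → ℕ)
variable (hinv : ∀ n, φ (φ n) = n)
variable (hneg : ∀ n, y n ≠ 0 → y (φ n) = - y n)
variable (hadj : ∀ n, y n ≠ 0 → φ n = n + 1 ∨ φ n + 1 = n)
variable (hmag : ∀ n m, y n ≠ 0 → |y n| = |y m| → m = n ∨ m = φ n)

/-- Split part of a finite set: nonzero entries whose partner is missing. -/
def splitSet (D : Finset ℕ) : Finset ℕ :=
  D.filter (fun n => y n ≠ 0 ∧ φ n ∉ D)

include hinv hneg in
theorem abs_sum_le_split (D : Finset ℕ) :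
    |∑ n ∈ D, y n| ≤ ∑ n ∈ splitSet y φ D, |y n| := by
  classical
  set D₀ : Finset ℕ := D.filter (fun n => y n ≠ 0 ∧ φ n ∈ D) with hD₀
  have hzero : ∑ n ∈ D₀, y n = 0 := by
    apply Finset.sum_involution (fun n _ => φ n)
    · intro a ha
      have h1 : y a ≠ 0 ∧ φ a ∈ D := (Finset.mem_filter.mp ha).2
      rw [hneg a h1.1]; ring
    · intro a ha h
      have h1 : y a ≠ 0 ∧ φ a ∈ D := (Finset.mem_filter.mp ha).2
      intro hc
      have := hneg a h1.1
      rw [hc] at this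
      exact h (by linarith)
    · intro a ha
      have h1 : y a ≠ 0 ∧ φ a ∈ D := (Finset.mem_filter.mp ha).2
      refine Finset.mem_filter.mpr ⟨h1.2, ?_, ?_⟩
      · rw [hneg a h1.1]; simpa using h1.1
      · rw [hinv a]; exact Finset.mem_filter.mp ha |>.1
    · intro a ha; exact hinv a
  have hsum : ∑ n ∈ D, y n = ∑ n ∈ D₀, y n + ∑ n ∈ D.filter (fun n => ¬(y n ≠ 0 ∧ φ n ∈ D)), y n := by
    rw [hD₀, Finset.sum_filter_add_sum_filter_not]
  rw [hsum, hzero, zero_add]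
  calc |∑ n ∈ D.filter (fun n => ¬(y n ≠ 0 ∧ φ n ∈ D)), y n|
      ≤ ∑ n ∈ D.filter (fun n => ¬(y n ≠ 0 ∧ φ n ∈ D)), |y n| := Finset.abs_sum_le_sum_abs _ _
    _ ≤ ∑ n ∈ splitSet y φ D, |y n| := by
        rw [splitSet]
        rw [← Finset.sum_filter_add_sum_filter_not (D.filter (fun n => ¬(y n ≠ 0 ∧ φ n ∈ D)))
          (fun n => y n ≠ 0)]
        have h2 : ∑ n ∈ (D.filter (fun n => ¬(y n ≠ 0 ∧ φ n ∈ D))).filter (fun n => ¬ y n ≠ 0), |y n| = 0 := by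
          apply Finset.sum_eq_zero
          intro n hn
          have := (Finset.mem_filter.mp hn).2
          simp only [not_not] at this
          simp [this]
        rw [h2, add_zero]
        apply le_of_eq
        apply Finset.sum_congr _ (fun _ _ => rfl)
        ext n
        simp only [Finset.mem_filter]
        constructor
        · rintro ⟨⟨hn, hc⟩, hy⟩
          exact ⟨hn, hy, fun hφ => hc ⟨hy, hφ⟩⟩
        · rintro ⟨hn, hy, hφ⟩
          exact ⟨⟨hn, fun hc => hφ hc.2⟩, hy⟩

include hinv hneg hmag in
/-- In a greedy set the split part is a subsingleton. -/
theorem split_subsingleton {B : Finset ℕ} (hB : GreedySet y B) :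
    ∀ n ∈ splitSet y φ B, ∀ n' ∈ splitSet y φ B, n = n' := by
  intro n hn n' hn'
  obtain ⟨hnB, hny, hnφ⟩ := by simpa [splitSet] using hn
  obtain ⟨hnB', hny', hnφ'⟩ := by simpa [splitSet] using hn'
  have h1 : |y (φ n')| ≤ |y n| := hB n hnB (φ n') hnφ'
  have h2 : |y (φ n)| ≤ |y n'| := hB n' hnB' (φ n) hnφ
  rw [hneg n' hny', abs_neg] at h1
  rw [hneg n hny, abs_neg] at h2
  have heq : |y n| = |y n'| := le_antisymm h2 h1
  rcases hmag n n' hny heq with h | h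
  · exact h.symm
  · exact absurd (h ▸ hnB') hnφ

include hinv hneg hmag in
theorem sum_greedy_le {B : Finset ℕ} (hB : GreedySet y B) {β : ℝ}
    (hβ : ∀ k ∉ B, |y k| ≤ β) : |∑ n ∈ B, y n| ≤ β := by
  have hβ0 : 0 ≤ β := by
    have h1 : (B.sup id + 1) ∉ B := by
      intro h
      have h2 : id (B.sup id + 1) ≤ B.sup id := Finset.le_sup h
      simp only [id] at h2
      omega
    exact le_trans (abs_nonneg _) (hβ _ h1)
  refine le_trans (abs_sum_le_split y φ hinv hneg B) ?_
  have hb : ∀ n ∈ splitSet y φ B, |y n| ≤ β := by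
    intro n hn
    obtain ⟨hnB, hny, hnφ⟩ := by simpa [splitSet] using hn
    have := hβ (φ n) hnφ
    rwa [hneg n hny, abs_neg] at this
  calc ∑ n ∈ splitSet y φ B, |y n| ≤ (splitSet y φ B).card • β :=
        Finset.sum_le_card_nsmul _ _ _ hb
    _ ≤ 1 * β := by
        rw [nsmul_eq_mul]
        apply mul_le_mul_of_nonneg_right _ hβ0
        have : (splitSet y φ B).card ≤ 1 := by
          apply Finset.card_le_one.mpr
          intro a ha b hb
          exact split_subsingleton y φ hinv hneg hmag hB a ha b hb
        exact_mod_cast this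
    _ = β := one_mul β

include hinv hneg hmag hadj in
theorem sum_interval_sdiff_le {B : Finset ℕ} (hB : GreedySet y B) {β : ℝ}
    (hβ : ∀ k ∉ B, |y k| ≤ β) (a b : ℕ) :
    |∑ n ∈ Finset.Icc a b \ B, y n| ≤ 3 * β := by
  classical
  have hβ0 : 0 ≤ β := by
    have h1 : (B.sup id + 1) ∉ B := by
      intro h
      have h2 : id (B.sup id + 1) ≤ B.sup id := Finset.le_sup h
      simp only [id] at h2
      omega
    exact le_trans (abs_nonneg _) (hβ _ h1)
  refine le_trans (abs_sum_le_split y φ hinv hneg _) ?_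
  set D : Finset ℕ := Finset.Icc a b \ B with hD
  set W : Finset ℕ := (splitSet y φ B).image φ with hW
  have hsub : splitSet y φ D ⊆ insert a (insert b W) := by
    intro n hn
    obtain ⟨hnD, hny, hnφ⟩ := by simpa [splitSet] using hn
    have hnI : n ∈ Finset.Icc a b := (Finset.mem_sdiff.mp hnD).1
    have hnB : n ∉ B := (Finset.mem_sdiff.mp hnD).2
    have hab : a ≤ n ∧ n ≤ b := Finset.mem_Icc.mp hnI
    simp only [Finset.mem_insert]
    by_cases hc : φ n ∈ B
    · right; right
      rw [hW, Finset.mem_image]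
      refine ⟨φ n, ?_, hinv n⟩
      simp only [splitSet, Finset.mem_filter]
      refine ⟨hc, ?_, by rw [hinv n]; exact hnB⟩
      rw [hneg n hny]; simpa using hny
    · have hφI : φ n ∉ Finset.Icc a b := by
        intro hφ
        exact hnφ (Finset.mem_sdiff.mpr ⟨hφ, hc⟩)
      rw [Finset.mem_Icc] at hφI
      push_neg at hφI
      rcases hadj n hny with h | h
      · right; left
        omega
      · left
        omega
  have hb : ∀ n ∈ splitSet y φ D, |y n| ≤ β := by
    intro n hn
    obtain ⟨hnD, hny, hnφ⟩ := by simpa [splitSet] using hn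
    exact hβ n (Finset.mem_sdiff.mp hnD).2
  calc ∑ n ∈ splitSet y φ D, |y n| ≤ (splitSet y φ D).card • β :=
        Finset.sum_le_card_nsmul _ _ _ hb
    _ ≤ 3 * β := by
        rw [nsmul_eq_mul]
        apply mul_le_mul_of_nonneg_right _ hβ0
        have h1 : (splitSet y φ D).card ≤ (insert a (insert b W)).card :=
          Finset.card_le_card hsub
        have h2 : W.card ≤ 1 := by
          rw [hW]
          refine le_trans Finset.card_image_le ?_
          apply Finset.card_le_one.mpr
          intro x hx z hz
          exact split_subsingleton y φ hinv hneg hmag hB x hx z hz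
        have h3 : (insert a (insert b W)).card ≤ 3 := by
          refine le_trans (Finset.card_insert_le _ _) ?_
          have := Finset.card_insert_le b W
          omega
        have : (splitSet y φ D).card ≤ 3 := le_trans h1 h3
        exact_mod_cast this

include hinv hneg hmag hadj in
theorem beta_le_of_greedy {B : Finset ℕ} (hB : GreedySet y B) {β : ℝ}
    (hβ : ∀ k ∉ B, |y k| ≤ β) : beta y B ≤ ENNReal.ofReal (3 * β) := by
  rw [beta]
  refine iSup_le fun a => iSup_le fun b => ?_
  exact ENNReal.ofReal_le_ofReal
    (sum_interval_sdiff_le y φ hinv hneg hadj hmag hB hβ a b)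


theorem finite_big (hc0 : Memc0 y) (t : ℝ) (ht : 0 < t) : {n : ℕ | t ≤ |y n|}.Finite := by
  obtain ⟨N, hN⟩ := Metric.tendsto_atTop.mp hc0 t ht
  apply Set.Finite.subset (Finset.range N).finite_toSet
  intro n hn
  simp only [Set.mem_setOf_eq] at hn
  simp only [Finset.coe_range, Set.mem_Iio]
  by_contra h
  push_neg at h
  have := hN n h
  rw [Real.dist_eq, sub_zero] at this
  linarith

/-- The canonical greedy set at strict threshold `t`. -/
def strictBig (hc0 : Memc0 y) (t : ℝ) (ht : 0 < t) : Finset ℕ :=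
  Set.Finite.toFinset
    (Set.Finite.subset (finite_big y hc0 t ht)
      (fun n hn => by
        simp only [Set.mem_setOf_eq] at hn ⊢
        exact le_of_lt hn))

theorem strictBig_mem (hc0 : Memc0 y) {t : ℝ} (ht : 0 < t) {n : ℕ} :
    n ∈ strictBig y hc0 t ht ↔ t < |y n| := by
  simp only [strictBig, Set.Finite.mem_toFinset, Set.mem_setOf_eq]
  exact Set.Finite.mem_toFinset _

theorem strictBig_greedy (hc0 : Memc0 y) {t : ℝ} (ht : 0 < t) :
    GreedySet y (strictBig y hc0 t ht) := by
  intro n hn k hk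
  rw [strictBig_mem y hc0 ht] at hn hk
  push_neg at hk
  linarith

include hinv hneg hmag in
theorem greedyLim_zero (hc0 : Memc0 y) : GreedyLim y 0 := by
  intro ε hε
  refine ⟨strictBig y hc0 (ε/2) (by linarith), strictBig_greedy y hc0 (by linarith), ?_⟩
  intro B hBg hAB
  have hβ : ∀ k ∉ B, |y k| ≤ ε/2 := by
    intro k hk
    have : k ∉ strictBig y hc0 (ε/2) (by linarith) := fun h => hk (hAB h)
    rw [strictBig_mem y hc0 (by linarith)] at this
    push_neg at this
    exact this
  have := sum_greedy_le y φ hinv hneg hmag hBg hβ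
  rw [oneStar, sub_zero]
  linarith

include hinv hneg hmag hadj in
theorem memB0_of_pairing (hc0 : Memc0 y) : MemB0 y := by
  refine ⟨hc0, fun ε hε => ?_⟩
  refine ⟨strictBig y hc0 (ε/8) (by linarith), strictBig_greedy y hc0 (by linarith), ?_⟩
  intro B hBg hAB
  have hβ : ∀ k ∉ B, |y k| ≤ ε/8 := by
    intro k hk
    have : k ∉ strictBig y hc0 (ε/8) (by linarith) := fun h => hk (hAB h)
    rw [strictBig_mem y hc0 (by linarith)] at this
    push_neg at this
    exact this
  refine lt_of_le_of_lt (beta_le_of_greedy y φ hinv hneg hadj hmag hBg hβ) ?_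
  rw [ENNReal.ofReal_lt_ofReal_iff hε]
  linarith

include hinv hneg hmag hadj in
theorem memB_of_pairing {C : ℝ} (hC : ∀ n, |y n| ≤ C) : MemB y := by
  rw [MemB, BNorm]
  have hb : ∀ A ∈ {A : Finset ℕ | GreedySet y A}, beta y A ≤ ENNReal.ofReal (3*C) :=
    fun A hA => beta_le_of_greedy y φ hinv hneg hadj hmag hA (fun k _ => hC k)
  exact lt_of_le_of_lt (iSup₂_le hb) ENNReal.ofReal_lt_top

include hinv hneg hadj in
theorem seriesLim_zero (hc0 : Memc0 y) : SeriesLim y 0 := by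
  rw [SeriesLim, Metric.tendsto_atTop]
  intro ε hε
  obtain ⟨N, hN⟩ := Metric.tendsto_atTop.mp hc0 ε hε
  refine ⟨N + 1, fun m hm => ?_⟩
  rw [Real.dist_eq, sub_zero]
  have key : |∑ n ∈ Finset.range m, y n| ≤ ∑ n ∈ splitSet y φ (Finset.range m), |y n| :=
    abs_sum_le_split y φ hinv hneg _
  have hsub : splitSet y φ (Finset.range m) ⊆ {m - 1} := by
    intro n hn
    simp only [splitSet, Finset.mem_filter, Finset.mem_range] at hn
    obtain ⟨hnD, hny, hnφ⟩ := hn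
    have hφ : ¬ (φ n < m) := hnφ
    rcases hadj n hny with h | h
    · simp only [Finset.mem_singleton]; omega
    · exfalso; omega
  have h2 : ∑ n ∈ splitSet y φ (Finset.range m), |y n| ≤ ∑ n ∈ ({m-1} : Finset ℕ), |y n| :=
    Finset.sum_le_sum_of_subset_of_nonneg hsub (fun _ _ _ => abs_nonneg _)
  rw [Finset.sum_singleton] at h2
  have h3 := hN (m-1) (by omega)
  rw [Real.dist_eq, sub_zero] at h3
  calc |∑ n ∈ Finset.range m, y n| ≤ |y (m-1)| := le_trans key h2
    _ < ε := h3

end Pairing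

/-! ### The block construction -/

def mblk (k : ℕ) : ℕ := (4^((k+1)^2) + k) / (k+1)

def dlt (k : ℕ) : ℝ := ((4:ℝ)^((k+1)^2))⁻¹

def sbt (k : ℕ) : ℝ := ((3:ℝ)^(k+2))⁻¹

def Pb : ℕ → ℕ
  | 0 => 0
  | (k+1) => Pb k + mblk k + 1

def blkOf (n : ℕ) : ℕ := Nat.findGreatest (fun k => Pb k ≤ n) n

def cseq (n : ℕ) : ℝ :=
  sbt (blkOf n) + ((mblk (blkOf n) - (n - Pb (blkOf n)) : ℕ) : ℝ) * dlt (blkOf n)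

theorem dlt_pos (k : ℕ) : 0 < dlt k := by
  rw [dlt]; positivity

theorem sbt_pos (k : ℕ) : 0 < sbt k := by
  rw [sbt]; positivity

theorem four_pow_eq (k : ℕ) : ((4:ℝ)^((k+1)^2)) = ((4^((k+1)^2) : ℕ) : ℝ) := by
  push_cast; ring

theorem mblk_mul_ge (k : ℕ) : 4^((k+1)^2) ≤ mblk k * (k+1) := by
  have h := Nat.div_add_mod (4^((k+1)^2) + k) (k+1)
  rw [Nat.mul_comm] at h
  have h2 : (4^((k+1)^2) + k) % (k+1) < k + 1 := Nat.mod_lt _ (by omega)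
  rw [mblk]
  omega

theorem mblk_mul_le (k : ℕ) : mblk k * (k+1) ≤ 4^((k+1)^2) + k := by
  rw [mblk]
  exact Nat.div_mul_le_self _ _

theorem mblk_pos (k : ℕ) : 1 ≤ mblk k := by
  rw [mblk, Nat.one_le_div_iff (by omega)]
  have : 1 ≤ 4^((k+1)^2) := Nat.one_le_pow _ _ (by norm_num)
  omega

theorem mdlt_ge (k : ℕ) : 1/((k:ℝ)+1) ≤ (mblk k : ℝ) * dlt k := by
  have h := mblk_mul_ge k
  have hcast : ((4:ℝ)^((k+1)^2)) ≤ (mblk k : ℝ) * ((k:ℝ)+1) := by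
    rw [four_pow_eq]
    exact_mod_cast h
  have h4 : (0:ℝ) < (4:ℝ)^((k+1)^2) := by positivity
  have hk : (0:ℝ) < (k:ℝ)+1 := by positivity
  have hinv : ((4:ℝ)^((k+1)^2)) * dlt k = 1 := by
    rw [dlt]; exact mul_inv_cancel₀ h4.ne'
  rw [div_le_iff₀ hk]
  nlinarith [mul_le_mul_of_nonneg_right hcast (dlt_pos k).le]

theorem mdlt_le (k : ℕ) : (mblk k : ℝ) * dlt k ≤ 1/((k:ℝ)+1) + dlt k := by
  have h := mblk_mul_le k
  have hcast : (mblk k : ℝ) * ((k:ℝ)+1) ≤ ((4:ℝ)^((k+1)^2)) + k := by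
    rw [four_pow_eq]
    exact_mod_cast h
  have h4 : (0:ℝ) < (4:ℝ)^((k+1)^2) := by positivity
  have hk : (0:ℝ) < (k:ℝ)+1 := by positivity
  have hinv : ((4:ℝ)^((k+1)^2)) * dlt k = 1 := by
    rw [dlt]; exact mul_inv_cancel₀ h4.ne'
  have hrhs : 1/((k:ℝ)+1) + dlt k = (1 + dlt k*((k:ℝ)+1))/((k:ℝ)+1) := by
    field_simp
  rw [hrhs, le_div_iff₀ hk]
  nlinarith [mul_le_mul_of_nonneg_right hcast (dlt_pos k).le, dlt_pos k,
    (Nat.cast_nonneg k : (0:ℝ) ≤ k)]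


theorem nat_le_pow3 (m : ℕ) : m ≤ 3^m := Nat.le_of_lt (Nat.lt_pow_self (by norm_num))

theorem nat_le_pow4 (m : ℕ) : m ≤ 4^m := Nat.le_of_lt (Nat.lt_pow_self (by norm_num))

theorem dlt_le_inv (k : ℕ) : dlt k ≤ 1/((k:ℝ)+1) := by
  have h1 : (k+1 : ℕ) ≤ 4^((k+1)^2) := by
    calc (k+1:ℕ) ≤ 4^(k+1) := nat_le_pow4 _
      _ ≤ 4^((k+1)^2) := Nat.pow_le_pow_right (by norm_num) (by nlinarith)
  have h2 : ((k:ℝ)+1) ≤ (4:ℝ)^((k+1)^2) := by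
    rw [four_pow_eq]
    exact_mod_cast h1
  rw [dlt, one_div]
  exact inv_anti₀ (by positivity) h2

theorem sbt_le_inv (k : ℕ) : sbt k ≤ 1/((k:ℝ)+1) := by
  have h1 : (k+1 : ℕ) ≤ 3^(k+2) := by
    calc (k+1:ℕ) ≤ 3^(k+1) := nat_le_pow3 _
      _ ≤ 3^(k+2) := Nat.pow_le_pow_right (by norm_num) (by omega)
  have h2 : ((k:ℝ)+1) ≤ (3:ℝ)^(k+2) := by
    have : ((3:ℝ)^(k+2)) = ((3^(k+2) : ℕ) : ℝ) := by push_cast; ring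
    rw [this]
    exact_mod_cast h1
  rw [sbt, one_div]
  exact inv_anti₀ (by positivity) h2

theorem sbt_succ_lt (k : ℕ) : sbt (k+1) < sbt k := by
  rw [sbt, sbt]
  apply inv_strictAnti₀ (by positivity)
  apply pow_lt_pow_right₀ (by norm_num)
  omega

theorem sbt_sub (k : ℕ) : sbt k - sbt (k+1) = 2 * sbt (k+1) := by
  rw [sbt, sbt]
  have h3 : (3:ℝ)^(k+1+2) = 3 * (3:ℝ)^(k+2) := by ring
  rw [h3]
  have : ((3:ℝ)^(k+2)) ≠ 0 := by positivity
  field_simp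
  ring

theorem three_pow_ge (k : ℕ) : 4*(k+2) ≤ 3^(k+3) := by
  induction k with
  | zero => norm_num
  | succ n ih =>
    have : 3^(n+1+3) = 3*3^(n+3) := by ring
    omega

/-- The jump size into block `k+1`. -/
theorem jump_ge (k : ℕ) :
    1/(2*((k:ℝ)+2)) ≤ sbt (k+1) + (mblk (k+1) : ℝ) * dlt (k+1) - sbt k := by
  have h1 := mdlt_ge (k+1)
  have h2 := sbt_sub k
  have h3 : 2/((3:ℝ)^(k+3)) ≤ 1/(2*((k:ℝ)+2)) := by
    have hn : ((4:ℝ)*((k:ℝ)+2)) ≤ (3:ℝ)^(k+3) := by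
      have : ((3:ℝ)^(k+3)) = ((3^(k+3) : ℕ) : ℝ) := by push_cast; ring
      rw [this]
      exact_mod_cast three_pow_ge k
    rw [div_le_div_iff₀ (by positivity) (by positivity)]
    nlinarith
  have h4 : sbt k - sbt (k+1) = 2/((3:ℝ)^(k+3)) := by
    rw [h2, sbt, show k+1+2 = k+3 from by omega]
    ring
  push_cast at h1
  have h1' : 1/((k:ℝ)+2) ≤ (mblk (k+1) : ℝ) * dlt (k+1) := by
    rw [show ((k:ℝ)+1+1) = (k:ℝ)+2 from by ring] at h1
    exact h1
  have hh : 1/((k:ℝ)+2) = 2*(1/(2*((k:ℝ)+2))) := by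
    field_simp
  linarith

theorem jump_le (k : ℕ) :
    sbt (k+1) + (mblk (k+1) : ℝ) * dlt (k+1) - sbt k ≤ 3 := by
  have h1 := mdlt_le (k+1)
  have h2 := dlt_le_inv (k+1)
  have h3 := sbt_le_inv (k+1)
  have h4 := sbt_pos k
  have h5 : (0:ℝ) < (k:ℝ)+1+1 := by positivity
  have h6 : 1/((k:ℝ)+1+1) ≤ 1 := by
    rw [div_le_one h5]; linarith [Nat.cast_nonneg (α := ℝ) k]
  push_cast at h1 h2 h3
  linarith

theorem Pb_zero : Pb 0 = 0 := rfl

theorem Pb_succ (k : ℕ) : Pb (k+1) = Pb k + mblk k + 1 := rfl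

theorem Pb_strictMono : StrictMono Pb := by
  apply strictMono_nat_of_lt_succ
  intro n
  rw [Pb_succ]
  omega

theorem le_Pb (k : ℕ) : k ≤ Pb k := by
  induction k with
  | zero => simp [Pb_zero]
  | succ n ih => rw [Pb_succ]; omega

theorem blkOf_le_self (n : ℕ) : Pb (blkOf n) ≤ n := by
  rw [blkOf]
  exact Nat.findGreatest_spec (P := fun k => Pb k ≤ n) (m := 0) (Nat.zero_le n)
    (show Pb 0 ≤ n by rw [Pb_zero]; exact Nat.zero_le n)

theorem blkOf_lt_succ (n : ℕ) : n < Pb (blkOf n + 1) := by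
  by_contra h
  push_neg at h
  have h1 : blkOf n + 1 ≤ n := le_trans (le_Pb _) h
  have h2 : blkOf n + 1 ≤ blkOf n := by
    rw [blkOf]
    exact Nat.le_findGreatest h1 h
  omega

theorem le_blkOf (K n : ℕ) (h : Pb K ≤ n) : K ≤ blkOf n := by
  rw [blkOf]
  exact Nat.le_findGreatest (le_trans (le_Pb K) h) h

theorem blkOf_eq (k i : ℕ) (hi : i ≤ mblk k) : blkOf (Pb k + i) = k := by
  have h1 : k ≤ blkOf (Pb k + i) := le_blkOf k _ (by omega)
  have h2 := blkOf_lt_succ (Pb k + i)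
  by_contra h
  have h3 : k + 1 ≤ blkOf (Pb k + i) := by omega
  have h4 : Pb (k+1) ≤ Pb (blkOf (Pb k + i)) := Pb_strictMono.monotone (by omega)
  have h5 : Pb (blkOf (Pb k + i)) ≤ Pb k + i := blkOf_le_self _
  rw [Pb_succ] at h4
  omega

theorem cseq_eq (k i : ℕ) (hi : i ≤ mblk k) :
    cseq (Pb k + i) = sbt k + ((mblk k - i : ℕ) : ℝ) * dlt k := by
  rw [cseq, blkOf_eq k i hi]
  congr 3
  omega

theorem cseq_pos (n : ℕ) : 0 < cseq n := by
  rw [cseq]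
  have := sbt_pos (blkOf n)
  have := dlt_pos (blkOf n)
  have : (0:ℝ) ≤ ((mblk (blkOf n) - (n - Pb (blkOf n)) : ℕ) : ℝ) := Nat.cast_nonneg _
  nlinarith [dlt_pos (blkOf n), sbt_pos (blkOf n)]

theorem cseq_le (n : ℕ) : cseq n ≤ 3/((blkOf n : ℝ)+1) := by
  rw [cseq]
  set k := blkOf n
  have h1 : ((mblk k - (n - Pb k) : ℕ) : ℝ) ≤ (mblk k : ℝ) := by
    exact_mod_cast Nat.sub_le _ _
  have h2 : ((mblk k - (n - Pb k) : ℕ) : ℝ) * dlt k ≤ (mblk k : ℝ) * dlt k :=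
    mul_le_mul_of_nonneg_right h1 (dlt_pos k).le
  have h3 := mdlt_le k
  have h4 := dlt_le_inv k
  have h5 := sbt_le_inv k
  have h6 : 3/((k:ℝ)+1) = 1/((k:ℝ)+1) + 1/((k:ℝ)+1) + 1/((k:ℝ)+1) := by ring
  rw [h6]
  linarith

theorem cseq_le3 (n : ℕ) : cseq n ≤ 3 := by
  have h := cseq_le n
  have h2 : 3/((blkOf n : ℝ)+1) ≤ 3 := by
    rw [div_le_iff₀ (by positivity)]
    nlinarith [Nat.cast_nonneg (α := ℝ) (blkOf n)]
  linarith

theorem cseq_tendsto : Tendsto cseq atTop (nhds 0) := by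
  rw [Metric.tendsto_atTop]
  intro ε hε
  obtain ⟨K, hK⟩ := exists_nat_gt (3/ε)
  refine ⟨Pb K, fun n hn => ?_⟩
  rw [Real.dist_eq, sub_zero, abs_of_pos (cseq_pos n)]
  have h1 : K ≤ blkOf n := le_blkOf K n hn
  have h2 : cseq n ≤ 3/((blkOf n : ℝ)+1) := cseq_le n
  have h3 : 3/((blkOf n : ℝ)+1) ≤ 3/((K:ℝ)+1) := by
    apply div_le_div_of_nonneg_left (by norm_num) (by positivity)
    have : (K:ℝ) ≤ (blkOf n : ℝ) := by exact_mod_cast h1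
    linarith
  have h4 : 3/((K:ℝ)+1) < ε := by
    rw [div_lt_iff₀ (by positivity)]
    have h5 : 3/ε < (K:ℝ) := hK
    rw [div_lt_iff₀ hε] at h5
    nlinarith
  linarith


theorem val_block_ne {k k' j j' : ℕ} (hk : k < k')
    (h : sbt k + (j:ℝ)*dlt k = sbt k' + (j':ℝ)*dlt k') : False := by
  obtain ⟨d, hd⟩ : ∃ d, k' + 2 = (k+2) + (d+1) := ⟨k' - k - 1, by omega⟩
  obtain ⟨e, he⟩ : ∃ e, (k'+1)^2 = (k+1)^2 + (e+1) := by
    refine ⟨(k'+1)^2 - (k+1)^2 - 1, ?_⟩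
    have : (k+1)^2 < (k'+1)^2 := Nat.pow_lt_pow_left (by omega) (by norm_num)
    omega
  rw [sbt, sbt, dlt, dlt, hd, he] at h
  have ha : ((3:ℝ)^(k+2)) ≠ 0 := by positivity
  have hb : ((4:ℝ)^((k+1)^2)) ≠ 0 := by positivity
  have hp : ((3:ℝ)^(d+1)) ≠ 0 := by positivity
  have hq : ((4:ℝ)^(e+1)) ≠ 0 := by positivity
  have key : ((3^(d+1) * 4^((k+1)^2+(e+1)) + j*3^((k+2)+(d+1))*4^(e+1) : ℕ) : ℝ)
      = ((4^((k+1)^2+(e+1)) + j'*3^((k+2)+(d+1)) : ℕ) : ℝ) := by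
    push_cast
    rw [pow_add, pow_add]
    have hne : ((3:ℝ)^(k+2)*(4:ℝ)^((k+1)^2)) ≠ 0 := by positivity
    apply mul_left_cancel₀ hne
    field_simp at h
    linear_combination h
  have keyn : (3^(d+1) * 4^((k+1)^2+(e+1)) + j*3^((k+2)+(d+1))*4^(e+1) : ℕ)
      = (4^((k+1)^2+(e+1)) + j'*3^((k+2)+(d+1)) : ℕ) := by exact_mod_cast key
  have m1 : (3:ℕ) ∣ 3^(d+1) * 4^((k+1)^2+(e+1)) :=
    Dvd.dvd.mul_right (dvd_pow_self 3 (Nat.succ_ne_zero d)) _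
  have m2 : (3:ℕ) ∣ j*3^((k+2)+(d+1))*4^(e+1) :=
    Dvd.dvd.mul_right ((dvd_pow_self 3 (by omega)).mul_left j) _
  have m3 : (3:ℕ) ∣ j'*3^((k+2)+(d+1)) := (dvd_pow_self 3 (by omega)).mul_left j'
  have m4 : (4:ℕ)^((k+1)^2+(e+1)) % 3 = 1 := by
    rw [Nat.pow_mod]
    norm_num
  omega

theorem cseq_inj : Function.Injective cseq := by
  intro n n' h
  rw [cseq, cseq] at h
  have hkk : blkOf n = blkOf n' := by
    by_contra hne
    rcases Nat.lt_or_ge (blkOf n) (blkOf n') with hlt | hge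
    · exact val_block_ne hlt h
    · exact val_block_ne (by omega) h.symm
  rw [← hkk] at h
  have hJ : ((mblk (blkOf n) - (n - Pb (blkOf n)) : ℕ) : ℝ)
      = ((mblk (blkOf n) - (n' - Pb (blkOf n)) : ℕ) : ℝ) :=
    mul_right_cancel₀ (dlt_pos (blkOf n)).ne' (by linarith)
  have hJ2 : mblk (blkOf n) - (n - Pb (blkOf n)) = mblk (blkOf n) - (n' - Pb (blkOf n)) := by
    exact_mod_cast hJ
  have b1 : Pb (blkOf n) ≤ n := blkOf_le_self n
  have b2 : Pb (blkOf n') ≤ n' := blkOf_le_self n'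
  have b3 : n < Pb (blkOf n + 1) := blkOf_lt_succ n
  have b4 : n' < Pb (blkOf n' + 1) := blkOf_lt_succ n'
  rw [Pb_succ] at b3 b4
  rw [← hkk] at b2 b4
  omega


/-! ### The sequences `f` and `g` -/

def fseq (n : ℕ) : ℝ := if Even n then cseq n else -cseq (n-1)

def gseq (n : ℕ) : ℝ := if n = 0 then 0 else if Even n then -cseq (n-1) else cseq n

def phf (n : ℕ) : ℕ := if Even n then n+1 else n-1

def phg (n : ℕ) : ℕ := if n = 0 then 0 else if Even n then n-1 else n+1

theorem even_sub_one_of_odd {n : ℕ} (h : Odd n) : Even (n-1) := by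
  rcases h with ⟨m, hm⟩
  exact ⟨m, by omega⟩

theorem odd_succ_of_even {n : ℕ} (h : Even n) : ¬ Even (n+1) := by
  simp [Nat.even_add_one, h]

theorem phf_inv (n : ℕ) : phf (phf n) = n := by
  rcases Nat.even_or_odd n with he | ho
  · have h1 : ¬ Even (n+1) := odd_succ_of_even he
    simp [phf, he, h1]
  · have h0 : ¬ Even n := Nat.not_even_iff_odd.mpr ho
    have h1 : Even (n-1) := even_sub_one_of_odd ho
    have h2 : 1 ≤ n := ho.pos
    simp [phf, h0, h1]
    omega

theorem fseq_ne (n : ℕ) : fseq n ≠ 0 := by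
  rw [fseq]
  rcases Nat.even_or_odd n with he | ho
  · simp [he]; exact (cseq_pos n).ne'
  · have h0 : ¬ Even n := Nat.not_even_iff_odd.mpr ho
    simp [h0]
    exact (cseq_pos (n-1)).ne'

theorem fseq_neg (n : ℕ) : fseq (phf n) = - fseq n := by
  rcases Nat.even_or_odd n with he | ho
  · have h1 : ¬ Even (n+1) := odd_succ_of_even he
    simp [phf, fseq, he, h1]
  · have h0 : ¬ Even n := Nat.not_even_iff_odd.mpr ho
    have h1 : Even (n-1) := even_sub_one_of_odd ho
    simp [phf, fseq, h0, h1]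

theorem fseq_adj (n : ℕ) : phf n = n + 1 ∨ phf n + 1 = n := by
  rcases Nat.even_or_odd n with he | ho
  · left; simp [phf, he]
  · right
    have h0 : ¬ Even n := Nat.not_even_iff_odd.mpr ho
    have h2 : 1 ≤ n := ho.pos
    simp [phf, h0]
    omega

theorem fseq_abs (n : ℕ) : |fseq n| = cseq (if Even n then n else n-1) := by
  rcases Nat.even_or_odd n with he | ho
  · rw [if_pos he, fseq, if_pos he]
    exact abs_of_pos (cseq_pos n)
  · have h0 : ¬ Even n := Nat.not_even_iff_odd.mpr ho
    rw [if_neg h0, fseq, if_neg h0, abs_neg]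
    exact abs_of_pos (cseq_pos (n-1))

theorem fseq_mag (n m : ℕ) (hn : fseq n ≠ 0) (h : |fseq n| = |fseq m|) :
    m = n ∨ m = phf n := by
  rw [fseq_abs, fseq_abs] at h
  have heq := cseq_inj h
  rcases Nat.even_or_odd n with he | ho <;> rcases Nat.even_or_odd m with he' | ho'
  · left
    rw [if_pos he, if_pos he'] at heq
    omega
  · right
    have h0' : ¬ Even m := Nat.not_even_iff_odd.mpr ho'
    rw [if_pos he, if_neg h0'] at heq
    have hm1 := ho'.pos
    rw [phf, if_pos he]
    omega
  · right
    have h0 : ¬ Even n := Nat.not_even_iff_odd.mpr ho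
    rw [if_neg h0, if_pos he'] at heq
    rw [phf, if_neg h0]
    omega
  · left
    have h0 : ¬ Even n := Nat.not_even_iff_odd.mpr ho
    have h0' : ¬ Even m := Nat.not_even_iff_odd.mpr ho'
    rw [if_neg h0, if_neg h0'] at heq
    have hm1 := ho'.pos
    have hn1 := ho.pos
    omega

theorem fseq_c0 : Memc0 fseq := by
  rw [Memc0, Metric.tendsto_atTop]
  intro ε hε
  obtain ⟨N, hN⟩ := Metric.tendsto_atTop.mp cseq_tendsto ε hε
  refine ⟨N + 1, fun n hn => ?_⟩
  rw [Real.dist_eq, sub_zero, fseq_abs]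
  have h1 : N ≤ (if Even n then n else n-1) := by
    split <;> omega
  have := hN _ h1
  rw [Real.dist_eq, sub_zero, abs_of_pos (cseq_pos _)] at this
  exact this

theorem fseq_bound (n : ℕ) : |fseq n| ≤ 3 := by
  rw [fseq_abs]
  exact cseq_le3 _

theorem gseq_ne0 (n : ℕ) (h : gseq n ≠ 0) : n ≠ 0 := by
  intro h0
  rw [h0] at h
  simp [gseq] at h

theorem phg_inv (n : ℕ) : phg (phg n) = n := by
  rcases Nat.eq_zero_or_pos n with h0 | h0
  · simp [phg, h0]
  rcases Nat.even_or_odd n with he | ho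
  · have h2 : 2 ≤ n := by
      rcases he with ⟨m, hm⟩; omega
    have h1 : ¬ Even (n-1) := by
      intro hc
      rcases hc with ⟨m, hm⟩
      rcases he with ⟨m', hm'⟩
      omega
    have h3 : n ≠ 0 := by omega
    have h4 : n - 1 ≠ 0 := by omega
    simp [phg, h3, he, h4, h1]
    omega
  · have h0' : ¬ Even n := Nat.not_even_iff_odd.mpr ho
    have h1 : Even (n+1) := by
      rcases ho with ⟨m, hm⟩
      exact ⟨m+1, by omega⟩
    simp [phg, h0.ne', h0', h1]

theorem gseq_neg (n : ℕ) (h : gseq n ≠ 0) : gseq (phg n) = - gseq n := by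
  have hn0 : n ≠ 0 := gseq_ne0 n h
  rcases Nat.even_or_odd n with he | ho
  · have h2 : 2 ≤ n := by rcases he with ⟨m, hm⟩; omega
    have h1 : ¬ Even (n-1) := by
      intro hc; rcases hc with ⟨m, hm⟩; rcases he with ⟨m', hm'⟩; omega
    have h4 : n - 1 ≠ 0 := by omega
    simp [phg, gseq, hn0, he, h4, h1]
  · have h0' : ¬ Even n := Nat.not_even_iff_odd.mpr ho
    have h1 : Even (n+1) := by rcases ho with ⟨m, hm⟩; exact ⟨m+1, by omega⟩
    simp [phg, gseq, hn0, h0', h1]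

theorem gseq_adj (n : ℕ) (h : gseq n ≠ 0) : phg n = n + 1 ∨ phg n + 1 = n := by
  have hn0 : n ≠ 0 := gseq_ne0 n h
  rcases Nat.even_or_odd n with he | ho
  · right; simp [phg, hn0, he]; omega
  · left
    have h0' : ¬ Even n := Nat.not_even_iff_odd.mpr ho
    simp [phg, hn0, h0']

theorem gseq_abs (n : ℕ) (hn : n ≠ 0) : |gseq n| = cseq (if Even n then n-1 else n) := by
  rcases Nat.even_or_odd n with he | ho
  · rw [if_pos he, gseq, if_neg hn, if_pos he, abs_neg]
    exact abs_of_pos (cseq_pos _)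
  · have h0 : ¬ Even n := Nat.not_even_iff_odd.mpr ho
    rw [if_neg h0, gseq, if_neg hn, if_neg h0]
    exact abs_of_pos (cseq_pos _)

theorem gseq_mag (n m : ℕ) (hn : gseq n ≠ 0) (h : |gseq n| = |gseq m|) :
    m = n ∨ m = phg n := by
  have hn0 : n ≠ 0 := gseq_ne0 n hn
  have hm0 : m ≠ 0 := by
    intro h0
    rw [h0] at h
    rw [gseq_abs n hn0] at h
    simp [gseq] at h
    exact absurd h (cseq_pos _).ne'
  rw [gseq_abs n hn0, gseq_abs m hm0] at h
  have heq := cseq_inj h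
  rcases Nat.even_or_odd n with he | ho <;> rcases Nat.even_or_odd m with he' | ho'
  · left
    rw [if_pos he, if_pos he'] at heq
    rcases he with ⟨a, ha⟩
    rcases he' with ⟨b, hb⟩
    omega
  · right
    have h0' : ¬ Even m := Nat.not_even_iff_odd.mpr ho'
    rw [if_pos he, if_neg h0'] at heq
    rw [phg, if_neg hn0, if_pos he]
    omega
  · right
    have h0 : ¬ Even n := Nat.not_even_iff_odd.mpr ho
    rw [if_neg h0, if_pos he'] at heq
    rw [phg, if_neg hn0, if_neg h0]
    rcases he' with ⟨b, hb⟩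
    omega
  · left
    have h0 : ¬ Even n := Nat.not_even_iff_odd.mpr ho
    have h0' : ¬ Even m := Nat.not_even_iff_odd.mpr ho'
    rw [if_neg h0, if_neg h0'] at heq
    omega

theorem gseq_c0 : Memc0 gseq := by
  rw [Memc0, Metric.tendsto_atTop]
  intro ε hε
  obtain ⟨N, hN⟩ := Metric.tendsto_atTop.mp cseq_tendsto ε hε
  refine ⟨N + 1, fun n hn => ?_⟩
  have hn0 : n ≠ 0 := by omega
  rw [Real.dist_eq, sub_zero, gseq_abs n hn0]
  have h1 : N ≤ (if Even n then n-1 else n) := by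
    split <;> omega
  have := hN _ h1
  rw [Real.dist_eq, sub_zero, abs_of_pos (cseq_pos _)] at this
  exact this

theorem gseq_bound (n : ℕ) : |gseq n| ≤ 3 := by
  rcases Nat.eq_zero_or_pos n with h0 | h0
  · simp [gseq, h0]
  rw [gseq_abs n h0.ne']
  exact cseq_le3 _

/-! ### The nice properties of `f` and `g` -/

theorem fseq_memA : MemA fseq :=
  ⟨fseq_c0, 0, greedyLim_zero fseq phf phf_inv (fun n _ => fseq_neg n) fseq_mag fseq_c0⟩

theorem fseq_memB0 : MemB0 fseq :=
  memB0_of_pairing fseq phf phf_inv (fun n _ => fseq_neg n) (fun n _ => fseq_adj n)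
    fseq_mag fseq_c0

theorem fseq_memB : MemB fseq :=
  memB_of_pairing fseq phf phf_inv (fun n _ => fseq_neg n) (fun n _ => fseq_adj n)
    fseq_mag fseq_bound

theorem fseq_memSeries : MemSeries fseq :=
  ⟨0, seriesLim_zero fseq phf phf_inv (fun n _ => fseq_neg n) (fun n _ => fseq_adj n) fseq_c0⟩

theorem gseq_memA : MemA gseq :=
  ⟨gseq_c0, 0, greedyLim_zero gseq phg phg_inv gseq_neg gseq_mag gseq_c0⟩

theorem gseq_memB0 : MemB0 gseq :=
  memB0_of_pairing gseq phg phg_inv gseq_neg gseq_adj gseq_mag gseq_c0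

theorem gseq_memB : MemB gseq :=
  memB_of_pairing gseq phg phg_inv gseq_neg gseq_adj gseq_mag gseq_bound

theorem gseq_memSeries : MemSeries gseq :=
  ⟨0, seriesLim_zero gseq phg phg_inv gseq_neg gseq_adj gseq_c0⟩


/-! ### Values of `h = f + g` -/

theorem h_zero : (fseq + gseq) 0 = cseq 0 := by
  have h0 : Even 0 := Even.zero
  simp [fseq, gseq, h0]

theorem h_succ (n : ℕ) (hn : 1 ≤ n) : (fseq + gseq) n = cseq n - cseq (n-1) := by
  have hn0 : n ≠ 0 := by omega
  rcases Nat.even_or_odd n with he | ho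
  · simp only [Pi.add_apply, fseq, gseq, if_pos he, if_neg hn0]
    ring
  · have h0 : ¬ Even n := Nat.not_even_iff_odd.mpr ho
    simp only [Pi.add_apply, fseq, gseq, if_neg h0, if_neg hn0]
    ring

theorem h_ne (n : ℕ) : (fseq + gseq) n ≠ 0 := by
  rcases Nat.eq_zero_or_pos n with h0 | h0
  · rw [h0, h_zero]
    exact (cseq_pos 0).ne'
  · rw [h_succ n h0]
    intro hc
    have : cseq n = cseq (n-1) := by linarith
    have := cseq_inj this
    omega

theorem h_c0 : Memc0 (fseq + gseq) := by
  have := fseq_c0.add gseq_c0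
  rw [add_zero] at this
  exact this

theorem h_tele (N : ℕ) : ∑ n ∈ Finset.range (N+1), (fseq + gseq) n = cseq N := by
  induction N with
  | zero => simpa [Finset.sum_range_one] using h_zero
  | succ m ih =>
    rw [Finset.sum_range_succ, ih, h_succ (m+1) (by omega)]
    simp

theorem sum_Icc0 (N : ℕ) : ∑ n ∈ Finset.Icc 0 N, (fseq + gseq) n = cseq N := by
  rw [show Finset.Icc 0 N = Finset.range (N+1) from by ext x; simp]
  exact h_tele N

theorem h_step (k i : ℕ) (h1 : 1 ≤ i) (h2 : i ≤ mblk k) :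
    (fseq + gseq) (Pb k + i) = - dlt k := by
  rw [h_succ _ (by omega), show Pb k + i - 1 = Pb k + (i-1) from by omega,
    cseq_eq k i h2, cseq_eq k (i-1) (by omega)]
  have hc1 : ((mblk k - i : ℕ) : ℝ) = (mblk k : ℝ) - i := by
    push_cast [h2]; ring
  have hc2 : ((mblk k - (i-1) : ℕ) : ℝ) = (mblk k : ℝ) - i + 1 := by
    have : (i:ℝ) - 1 = ((i - 1 : ℕ) : ℝ) := by push_cast [h1]; ring
    push_cast [show i - 1 ≤ mblk k from by omega]
    push_cast [h1]
    ring
  rw [hc1, hc2]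
  ring

theorem h_jump (k : ℕ) :
    (fseq + gseq) (Pb (k+1)) = sbt (k+1) + (mblk (k+1) : ℝ) * dlt (k+1) - sbt k := by
  have hp : 1 ≤ Pb (k+1) := by
    rw [Pb_succ]
    omega
  rw [h_succ _ hp]
  have e1 : Pb (k+1) = Pb (k+1) + 0 := by omega
  have e2 : Pb (k+1) - 1 = Pb k + mblk k := by rw [Pb_succ]; omega
  rw [e2, cseq_eq k (mblk k) le_rfl]
  conv_lhs => rw [e1, cseq_eq (k+1) 0 (Nat.zero_le _)]
  simp

theorem h_jump_pos (k : ℕ) : 1/(2*((k:ℝ)+2)) ≤ (fseq + gseq) (Pb (k+1)) := by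
  rw [h_jump]
  exact jump_ge k

theorem h_jump0_pos : 0 < (fseq + gseq) 0 := by
  rw [h_zero]; exact cseq_pos 0

theorem pos_classify (n : ℕ) (hn : 1 ≤ n) :
    (∃ k i, 1 ≤ i ∧ i ≤ mblk k ∧ n = Pb k + i) ∨ ∃ k, n = Pb (k+1) := by
  have b1 : Pb (blkOf n) ≤ n := blkOf_le_self n
  have b3 : n < Pb (blkOf n + 1) := blkOf_lt_succ n
  rw [Pb_succ] at b3
  rcases Nat.eq_zero_or_pos (n - Pb (blkOf n)) with h0 | h0
  · right
    have hb : blkOf n ≠ 0 := by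
      intro hc
      rw [hc, Pb_zero] at b1 h0
      omega
    refine ⟨blkOf n - 1, ?_⟩
    have he : blkOf n - 1 + 1 = blkOf n := by omega
    rw [he]
    omega
  · left
    exact ⟨blkOf n, n - Pb (blkOf n), h0, by omega, by omega⟩

theorem dlt_anti {k k' : ℕ} (h : dlt k ≤ dlt k') : k' ≤ k := by
  by_contra hc
  push_neg at hc
  have h1 : (4:ℝ)^((k+1)^2) < (4:ℝ)^((k'+1)^2) := by
    apply pow_lt_pow_right₀ (by norm_num)
    exact Nat.pow_lt_pow_left (by omega) (by norm_num)
  rw [dlt, dlt] at h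
  have h2 : (0:ℝ) < (4:ℝ)^((k+1)^2) := by positivity
  have := inv_strictAnti₀ h2 h1
  linarith

theorem harm4 (m : ℕ) : (m:ℝ)/8 ≤ ∑ k ∈ Finset.range (2^m), 1/(2*((k:ℝ)+2)) := by
  induction m with
  | zero =>
    simp
  | succ m ih =>
    have hle : (2:ℕ)^m ≤ 2^(m+1) := Nat.pow_le_pow_right (by omega) (by omega)
    have hsplit : Finset.range (2^(m+1))
        = Finset.range (2^m) ∪ (Finset.Ico (2^m) (2^(m+1)) : Finset ℕ) := by
      rw [Finset.range_eq_Ico, Finset.range_eq_Ico]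
      exact (Finset.Ico_union_Ico_eq_Ico (Nat.zero_le _) hle).symm
    have hdisj : Disjoint (Finset.range (2^m)) (Finset.Ico (2^m) (2^(m+1)) : Finset ℕ) := by
      rw [Finset.range_eq_Ico]
      exact Finset.Ico_disjoint_Ico_consecutive _ _ _
    rw [hsplit, Finset.sum_union hdisj]
    have hterm : ∀ k ∈ (Finset.Ico (2^m) (2^(m+1)) : Finset ℕ),
        (1:ℝ)/(2^(m+3)) ≤ 1/(2*((k:ℝ)+2)) := by
      intro k hk
      rw [Finset.mem_Ico] at hk
      apply div_le_div_of_nonneg_left (by norm_num) (by positivity)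
      have hk2 : (k:ℝ) ≤ (2:ℝ)^(m+1) - 1 := by
        have h1 : (k:ℕ) ≤ 2^(m+1) - 1 := by omega
        have h2 : ((2:ℝ)^(m+1)) = ((2^(m+1) : ℕ) : ℝ) := by push_cast; ring
        have h3 : (1:ℕ) ≤ 2^(m+1) := Nat.one_le_pow _ _ (by omega)
        rw [h2]
        calc (k:ℝ) ≤ ((2^(m+1) - 1 : ℕ) : ℝ) := by exact_mod_cast h1
          _ = ((2^(m+1):ℕ):ℝ) - 1 := by push_cast [h3]; ring
      have h4 : (2:ℝ)^(m+3) = 4*(2:ℝ)^(m+1) := by ring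
      rw [h4]
      nlinarith [pow_pos (show (0:ℝ) < 2 from by norm_num) (m+1)]
    have hlow : (1:ℝ)/8 ≤ ∑ k ∈ (Finset.Ico (2^m) (2^(m+1)) : Finset ℕ), 1/(2*((k:ℝ)+2)) := by
      calc (1:ℝ)/8 ≤ ((Finset.Ico (2^m) (2^(m+1)) : Finset ℕ)).card • ((1:ℝ)/(2^(m+3))) := by
            rw [Nat.card_Ico, nsmul_eq_mul]
            have hcard : (2^(m+1) - 2^m : ℕ) = 2^m := by
              have h5 : (2:ℕ)^(m+1) = 2*2^m := by ring
              omega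
            rw [hcard]
            have h4 : ((2:ℝ))^(m+3) = 8*(2:ℝ)^m := by ring
            have h5 : ((2^m : ℕ):ℝ) = (2:ℝ)^m := by push_cast; ring
            rw [h4, h5]
            have h6 : (0:ℝ) < (2:ℝ)^m := by positivity
            have h7 : (2:ℝ)^m * (1/(8*(2:ℝ)^m)) = 1/8 := by
              field_simp
            rw [h7]
        _ ≤ ∑ k ∈ (Finset.Ico (2^m) (2^(m+1)) : Finset ℕ), 1/(2*((k:ℝ)+2)) :=
            Finset.card_nsmul_le_sum _ _ _ hterm
    push_cast
    linarith


/-! ### Divergence of the greedy sums of `h` -/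

theorem two_mul_le_four_pow {E k : ℕ} (hE : 2 ≤ E) (hk : k < 2^(2*E-2)) :
    2*(k+2) ≤ 4^E := by
  have h4 : (4:ℕ)^E = 2^(2*E) := by
    rw [show (4:ℕ) = 2^2 from rfl, ← pow_mul]
  have h1 : (2:ℕ)^(2*E) = 2^(2*E-2)*4 := by
    rw [show 2*E = (2*E-2)+2 from by omega, pow_add]
    norm_num
  have h3 : (4:ℕ) ≤ 2^(2*E-2) := by
    calc (4:ℕ) = 2^2 := rfl
      _ ≤ 2^(2*E-2) := Nat.pow_le_pow_right (by omega) (by omega)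
  omega

theorem hdiv (R τ : ℝ) (hτ : 0 < τ) :
    ∃ B : Finset ℕ, GreedySet (fseq + gseq) B ∧
      (∀ n : ℕ, τ ≤ |(fseq + gseq) n| → n ∈ B) ∧
      R ≤ ∑ n ∈ B, (fseq + gseq) n := by
  obtain ⟨K, hK⟩ := exists_nat_gt (max (4*|R| + 9) (1/τ))
  have hK1 : 4*|R| + 9 < (K:ℝ) := lt_of_le_of_lt (le_max_left _ _) hK
  have hK2 : 1/τ < (K:ℝ) := lt_of_le_of_lt (le_max_right _ _) hK
  have hKpos : (0:ℝ) < K := by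
    have := abs_nonneg R
    linarith
  have hdK : dlt K < τ := by
    have h1 : dlt K ≤ 1/((K:ℝ)+1) := dlt_le_inv K
    have h2 : 1/((K:ℝ)+1) < τ := by
      rw [div_lt_iff₀ (by positivity)]
      rw [div_lt_iff₀ hτ] at hK2
      nlinarith
    linarith
  set h : ℕ → ℝ := fseq + gseq with hdef
  set B : Finset ℕ := (finite_big h h_c0 (dlt K) (dlt_pos K)).toFinset with hBdef
  have hBmem : ∀ n, n ∈ B ↔ dlt K ≤ |h n| := by
    intro n
    rw [hBdef, Set.Finite.mem_toFinset]
    exact Iff.rfl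
  refine ⟨B, ?_, ?_, ?_⟩
  · intro n hn k hk
    rw [hBmem] at hn hk
    push_neg at hk
    linarith
  · intro n hn
    rw [hBmem]
    linarith
  -- the sum estimate
  set E : ℕ := (K+1)^2 with hE
  have hE2 : 2 ≤ E := by
    have h1 : 1 ≤ K := by exact_mod_cast (by linarith [abs_nonneg R] : (1:ℝ) ≤ K)
    rw [hE]
    nlinarith
  set m : ℕ := 2*E - 2 with hm
  set M : ℕ := 2^m with hM
  have hdltK : dlt K = ((4:ℝ)^E)⁻¹ := by rw [dlt, hE]
  -- jumps in range M are in B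
  have hjump_in : ∀ k < M, dlt K ≤ h (Pb (k+1)) := by
    intro k hk
    have h1 := h_jump_pos k
    have h2 : 2*(k+2) ≤ 4^E := two_mul_le_four_pow hE2 (by rw [← hM]; exact hk)
    have h3 : (2*((k:ℝ)+2)) ≤ (4:ℝ)^E := by
      have : ((4:ℝ)^E) = ((4^E : ℕ):ℝ) := by push_cast; ring
      rw [this]
      exact_mod_cast h2
    have h4 : dlt K ≤ 1/(2*((k:ℝ)+2)) := by
      rw [hdltK, one_div]
      exact inv_anti₀ (by positivity) h3
    linarith
  set Jset : Finset ℕ := (Finset.range M).image (fun k => Pb (k+1)) with hJ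
  set Bpos : Finset ℕ := B.filter (fun n => 0 < h n) with hBpos
  set Bneg : Finset ℕ := B.filter (fun n => ¬ 0 < h n) with hBneg
  have hJsub : Jset ⊆ Bpos := by
    intro n hn
    rw [hJ, Finset.mem_image] at hn
    obtain ⟨k, hk, rfl⟩ := hn
    rw [Finset.mem_range] at hk
    have h1 := hjump_in k hk
    have h2 := h_jump_pos k
    have h3 : 0 < h (Pb (k+1)) := by
      have : (0:ℝ) < 1/(2*((k:ℝ)+2)) := by positivity
      linarith
    rw [hBpos, Finset.mem_filter, hBmem]
    exact ⟨by rw [abs_of_pos h3]; exact h1, h3⟩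
  have hJsum : ∑ n ∈ Jset, h n = ∑ k ∈ Finset.range M, h (Pb (k+1)) := by
    rw [hJ]
    apply Finset.sum_image
    intro a _ b _ hab
    have := Pb_strictMono.injective hab
    omega
  have hharm : ((m:ℝ))/8 ≤ ∑ k ∈ Finset.range M, h (Pb (k+1)) := by
    calc ((m:ℝ))/8 ≤ ∑ k ∈ Finset.range (2^m), 1/(2*((k:ℝ)+2)) := harm4 m
      _ ≤ ∑ k ∈ Finset.range M, h (Pb (k+1)) := by
          rw [hM]
          exact Finset.sum_le_sum (fun k _ => h_jump_pos k)
  have hpos_ge : ((m:ℝ))/8 ≤ ∑ n ∈ Bpos, h n := by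
    have h1 : ∑ n ∈ Jset, h n ≤ ∑ n ∈ Bpos, h n := by
      apply Finset.sum_le_sum_of_subset_of_nonneg hJsub
      intro n hn _
      rw [hBpos, Finset.mem_filter] at hn
      exact hn.2.le
    rw [hJsum] at h1
    linarith
  -- negative part
  set Steps : Finset ℕ := (Finset.range (K+1)).biUnion
    (fun k => (Finset.Icc 1 (mblk k)).image (fun i => Pb k + i)) with hSt
  have hstep_mem : ∀ n ∈ Steps, ∃ k i, k ≤ K ∧ 1 ≤ i ∧ i ≤ mblk k ∧ n = Pb k + i := by
    intro n hn
    rw [hSt, Finset.mem_biUnion] at hn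
    obtain ⟨k, hk, hn⟩ := hn
    rw [Finset.mem_image] at hn
    obtain ⟨i, hi, rfl⟩ := hn
    rw [Finset.mem_Icc] at hi
    rw [Finset.mem_range] at hk
    exact ⟨k, i, by omega, hi.1, hi.2, rfl⟩
  have hBneg_sub : Bneg ⊆ Steps := by
    intro n hn
    rw [hBneg, Finset.mem_filter] at hn
    obtain ⟨hnB, hneg⟩ := hn
    have hne := h_ne n
    have hlt : h n < 0 := by
      rcases lt_trichotomy (h n) 0 with hc | hc | hc
      · exact hc
      · exact absurd hc hne
      · exact absurd hc hneg
    have hn1 : 1 ≤ n := by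
      by_contra hc
      push_neg at hc
      interval_cases n
      exact absurd h_jump0_pos hneg
    rcases pos_classify n hn1 with ⟨k, i, hi1, hi2, rfl⟩ | ⟨k, rfl⟩
    · have hval : h (Pb k + i) = - dlt k := h_step k i hi1 hi2
      have habs : |h (Pb k + i)| = dlt k := by
        rw [hval, abs_neg, abs_of_pos (dlt_pos k)]
      rw [hBmem, habs] at hnB
      have hkK : k ≤ K := dlt_anti hnB
      rw [hSt, Finset.mem_biUnion]
      exact ⟨k, Finset.mem_range.mpr (by omega),
        Finset.mem_image.mpr ⟨i, Finset.mem_Icc.mpr ⟨hi1, hi2⟩, rfl⟩⟩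
    · have hposk : (0:ℝ) < h (Pb (k+1)) :=
        lt_of_lt_of_le (by positivity) (h_jump_pos k)
      exact absurd hposk hneg
  have hstep_val : ∀ n ∈ Steps, ∃ k, k ≤ K ∧ h n = - dlt k := by
    intro n hn
    obtain ⟨k, i, hkK, hi1, hi2, rfl⟩ := hstep_mem n hn
    exact ⟨k, hkK, h_step k i hi1 hi2⟩
  have hneg_bound : ∑ n ∈ Bneg, (- h n) ≤ 2*((K:ℝ)+1) := by
    have h1 : ∑ n ∈ Bneg, (- h n) ≤ ∑ n ∈ Steps, (- h n) := by
      apply Finset.sum_le_sum_of_subset_of_nonneg hBneg_sub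
      intro n hn _
      obtain ⟨k, _, hval⟩ := hstep_val n hn
      rw [hval]
      simp [(dlt_pos k).le]
    have hdisj : (↑(Finset.range (K+1)) : Set ℕ).PairwiseDisjoint
        (fun k => (Finset.Icc 1 (mblk k)).image (fun i => Pb k + i)) := by
      intro a _ b _ hab
      simp only [Function.onFun]
      rw [Finset.disjoint_left]
      intro n hna hnb
      rw [Finset.mem_image] at hna hnb
      obtain ⟨i, hi, hni⟩ := hna
      obtain ⟨i', hi', hni'⟩ := hnb
      rw [Finset.mem_Icc] at hi hi'
      rcases Nat.lt_or_ge a b with hl | hl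
      · have g1 : Pb (a+1) ≤ Pb b := Pb_strictMono.monotone (by omega)
        rw [Pb_succ] at g1
        omega
      · have hba : b < a := by omega
        have g1 : Pb (b+1) ≤ Pb a := Pb_strictMono.monotone (by omega)
        rw [Pb_succ] at g1
        omega
    have h2 : ∑ n ∈ Steps, (- h n)
        = ∑ k ∈ Finset.range (K+1), ∑ i ∈ Finset.Icc 1 (mblk k), (- h (Pb k + i)) := by
      rw [hSt, Finset.sum_biUnion hdisj]
      congr 1
      ext k
      apply Finset.sum_image
      intro a _ b _ hab
      have hab' : Pb k + a = Pb k + b := hab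
      omega
    have h3 : ∀ k ∈ Finset.range (K+1),
        ∑ i ∈ Finset.Icc 1 (mblk k), (- h (Pb k + i)) ≤ 2 := by
      intro k _
      have hv : ∀ i ∈ Finset.Icc 1 (mblk k), - h (Pb k + i) = dlt k := by
        intro i hi
        rw [Finset.mem_Icc] at hi
        show -(fseq + gseq) (Pb k + i) = dlt k
        rw [h_step k i hi.1 hi.2]
        ring
      rw [Finset.sum_congr rfl hv, Finset.sum_const, Nat.card_Icc]
      have hcard : mblk k + 1 - 1 = mblk k := by omega
      rw [hcard, nsmul_eq_mul]
      have := mdlt_le k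
      have := dlt_le_inv k
      have h5 : 1/((k:ℝ)+1) ≤ 1 := by
        rw [div_le_one (by positivity)]
        linarith [Nat.cast_nonneg (α := ℝ) k]
      linarith
    calc ∑ n ∈ Bneg, (- h n) ≤ ∑ n ∈ Steps, (- h n) := h1
      _ = ∑ k ∈ Finset.range (K+1), ∑ i ∈ Finset.Icc 1 (mblk k), (- h (Pb k + i)) := h2
      _ ≤ ∑ k ∈ Finset.range (K+1), (2:ℝ) := Finset.sum_le_sum h3
      _ = 2*((K:ℝ)+1) := by
          rw [Finset.sum_const, Finset.card_range, nsmul_eq_mul]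
          push_cast
          ring
  -- combine
  have hsplitB : ∑ n ∈ B, h n = ∑ n ∈ Bpos, h n + ∑ n ∈ Bneg, h n := by
    rw [hBpos, hBneg, Finset.sum_filter_add_sum_filter_not]
  have hBneg_ge : -(2*((K:ℝ)+1)) ≤ ∑ n ∈ Bneg, h n := by
    have := hneg_bound
    rw [Finset.sum_neg_distrib] at this
    linarith
  have hmcast : ((m:ℝ)) = 2*((K:ℝ)+1)^2 - 2 := by
    rw [hm, hE]
    have h0 : 1 ≤ (K+1)^2 := Nat.one_le_pow _ _ (by omega)
    push_cast [show 2 ≤ 2*(K+1)^2 from by omega]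
    ring
  have hfinal : R ≤ ((m:ℝ))/8 - 2*((K:ℝ)+1) := by
    rw [hmcast]
    nlinarith [le_abs_self R, abs_nonneg R]
  calc R ≤ ((m:ℝ))/8 - 2*((K:ℝ)+1) := hfinal
    _ ≤ ∑ n ∈ Bpos, h n + ∑ n ∈ Bneg, h n := by linarith
    _ = ∑ n ∈ B, h n := hsplitB.symm


/-! ### Negative results for `h` -/

theorem h_pos_min (A : Finset ℕ) :
    ∃ τ : ℝ, 0 < τ ∧ ∀ n ∈ A, τ ≤ |(fseq + gseq) n| := by
  set T : Finset ℝ := insert (1:ℝ) (A.image fun n => |(fseq + gseq) n|) with hT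
  have hTne : T.Nonempty := ⟨1, Finset.mem_insert_self _ _⟩
  refine ⟨T.min' hTne, ?_, ?_⟩
  · set x := T.min' hTne with hx
    have hmem : x ∈ T := T.min'_mem hTne
    rw [hT, Finset.mem_insert] at hmem
    rcases hmem with h1 | h1
    · rw [h1]; norm_num
    · rw [Finset.mem_image] at h1
      obtain ⟨n, _, hn⟩ := h1
      rw [← hn]
      exact abs_pos.mpr (h_ne n)
  · intro n hn
    apply Finset.min'_le
    rw [hT]
    exact Finset.mem_insert_of_mem (Finset.mem_image_of_mem _ hn)

theorem h_not_memA : ¬ MemA (fseq + gseq) := by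
  rintro ⟨hc0, s, hs⟩
  obtain ⟨A, hAg, hall⟩ := hs 1 one_pos
  obtain ⟨τ, hτ, hmin⟩ := h_pos_min A
  obtain ⟨B, hBg, hBcont, hBsum⟩ := hdiv (s+2) τ hτ
  have hsub : A ⊆ B := fun n hn => hBcont n (hmin n hn)
  have h1 := hall B hBg hsub
  rw [oneStar] at h1
  have h2 := le_abs_self (∑ n ∈ B, (fseq + gseq) n - s)
  linarith

theorem beta_lower (B : Finset ℕ) :
    ENNReal.ofReal (∑ n ∈ B, (fseq + gseq) n - 3) ≤ beta (fseq + gseq) B := by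
  classical
  set N := B.sup id with hN
  have hsub : B ⊆ Finset.Icc 0 N := by
    intro n hn
    rw [Finset.mem_Icc]
    exact ⟨Nat.zero_le _, Finset.le_sup (f := id) hn⟩
  have hsdiff := Finset.sum_sdiff (f := fseq + gseq) hsub
  rw [sum_Icc0] at hsdiff
  have hval : ∑ n ∈ Finset.Icc 0 N \ B, (fseq + gseq) n
      = cseq N - ∑ n ∈ B, (fseq + gseq) n := by linarith
  have h1 : ENNReal.ofReal (∑ n ∈ B, (fseq + gseq) n - 3)
      ≤ ENNReal.ofReal |oneStar (fseq + gseq) (Finset.Icc 0 N \ B)| := by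
    apply ENNReal.ofReal_le_ofReal
    rw [oneStar, hval]
    have h2 := neg_abs_le (cseq N - ∑ n ∈ B, (fseq + gseq) n)
    have h3 := cseq_le3 N
    linarith
  refine le_trans h1 ?_
  rw [beta]
  exact le_iSup₂ (f := fun a b => ENNReal.ofReal |oneStar (fseq + gseq) (Finset.Icc a b \ B)|) 0 N

theorem h_not_memB : ¬ MemB (fseq + gseq) := by
  intro hB
  rw [MemB] at hB
  obtain ⟨B, hBg, _, hBsum⟩ := hdiv ((BNorm (fseq + gseq)).toReal + 4) 1 one_pos
  have h1 : ENNReal.ofReal ((BNorm (fseq + gseq)).toReal + 1) ≤ beta (fseq + gseq) B := by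
    refine le_trans (ENNReal.ofReal_le_ofReal (by linarith)) (beta_lower B)
  have h2 : beta (fseq + gseq) B ≤ BNorm (fseq + gseq) := by
    rw [BNorm]
    exact le_biSup (fun A => beta (fseq + gseq) A) hBg
  have h3 : BNorm (fseq + gseq) < ENNReal.ofReal ((BNorm (fseq + gseq)).toReal + 1) := by
    rw [ENNReal.lt_ofReal_iff_toReal_lt hB.ne]
    linarith [ENNReal.toReal_nonneg (a := BNorm (fseq + gseq))]
  exact absurd (lt_of_lt_of_le h3 (le_trans h1 h2)) (lt_irrefl _)

theorem h_not_memB0 : ¬ MemB0 (fseq + gseq) := by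
  rintro ⟨hc0, hb0⟩
  obtain ⟨A, hAg, hall⟩ := hb0 1 one_pos
  obtain ⟨τ, hτ, hmin⟩ := h_pos_min A
  obtain ⟨B, hBg, hBcont, hBsum⟩ := hdiv 4 τ hτ
  have hsub : A ⊆ B := fun n hn => hBcont n (hmin n hn)
  have hlt := hall B hBg hsub
  have hge : ENNReal.ofReal 1 ≤ beta (fseq + gseq) B :=
    le_trans (ENNReal.ofReal_le_ofReal (by linarith)) (beta_lower B)
  exact absurd (lt_of_le_of_lt hge hlt) (lt_irrefl _)

end Aux

/-- none of `𝔹₀`, `𝔹`, `𝔸`, `𝔸 ∩ 𝒔`, `𝔹 ∩ 𝒔`, `𝔸 ∩ 𝔹 ∩ 𝒔` is closed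
under addition of sequences. -/
theorem stmt_17 :
    (∃ f g : ℕ → ℝ, MemB0 f ∧ MemB0 g ∧ ¬ MemB0 (f + g)) ∧
    (∃ f g : ℕ → ℝ, MemB f ∧ MemB g ∧ ¬ MemB (f + g)) ∧
    (∃ f g : ℕ → ℝ, MemA f ∧ MemA g ∧ ¬ MemA (f + g)) ∧
    (∃ f g : ℕ → ℝ, (MemA f ∧ MemSeries f) ∧ (MemA g ∧ MemSeries g) ∧
      ¬ (MemA (f + g) ∧ MemSeries (f + g))) ∧
    (∃ f g : ℕ → ℝ, (MemB f ∧ MemSeries f) ∧ (MemB g ∧ MemSeries g) ∧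
      ¬ (MemB (f + g) ∧ MemSeries (f + g))) ∧
    (∃ f g : ℕ → ℝ, (MemA f ∧ MemB f ∧ MemSeries f) ∧
      (MemA g ∧ MemB g ∧ MemSeries g) ∧
      ¬ (MemA (f + g) ∧ MemB (f + g) ∧ MemSeries (f + g))) := by
  refine ⟨⟨fseq, gseq, fseq_memB0, gseq_memB0, h_not_memB0⟩,
    ⟨fseq, gseq, fseq_memB, gseq_memB, h_not_memB⟩,
    ⟨fseq, gseq, fseq_memA, gseq_memA, h_not_memA⟩,
    ⟨fseq, gseq, ⟨fseq_memA, fseq_memSeries⟩, ⟨gseq_memA, gseq_memSeries⟩,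
      fun hc => h_not_memA hc.1⟩,
    ⟨fseq, gseq, ⟨fseq_memB, fseq_memSeries⟩, ⟨gseq_memB, gseq_memSeries⟩,
      fun hc => h_not_memB hc.1⟩,
    ⟨fseq, gseq, ⟨fseq_memA, fseq_memB, fseq_memSeries⟩,
      ⟨gseq_memA, gseq_memB, gseq_memSeries⟩,
      fun hc => h_not_memA hc.1⟩⟩
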